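/- Let S ⊆ ℂ be star-shaped with star center s such that |s| ≤ |z| for all z ∈ S, and let D(a,r) be any closed disk in ℂ. Then the Minkowski product D(a,r)·S is star-shaped. -/

import Mathlib

open Complex Set Metric

lemma inner_ge_aux (s w : ℂ)
    (h : ∀ t ∈ Set.Icc (0:ℝ) 1, Complex.normSq s ≤ Complex.normSq (((1 - t) : ℂ) * s + (t : ℂ) * w)) :
    Complex.normSq s ≤ s.re * w.re + s.im * w.im := by
  by_contra hc
  push_neg at hc
  rw [Complex.normSq_apply] at hc
  have hws : w ≠ s := by
    rintro rfl
    simp [Complex.normSq_apply] at hc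
  have hE : 0 < Complex.normSq (w - s) := Complex.normSq_pos.mpr (sub_ne_zero.mpr hws)
  rw [Complex.normSq_apply, Complex.sub_re, Complex.sub_im] at hE
  have hδ0 : 0 < (s.re * s.re + s.im * s.im) - (s.re * w.re + s.im * w.im) := by linarith
  set δ : ℝ := (s.re * s.re + s.im * s.im) - (s.re * w.re + s.im * w.im) with hδ
  set E : ℝ := (w.re - s.re) * (w.re - s.re) + (w.im - s.im) * (w.im - s.im) with hEdef
  set l := min 1 (δ / E) with hl
  have hl0 : 0 < l := lt_min one_pos (div_pos hδ0 hE)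
  have hl1 : l ≤ 1 := min_le_left _ _
  have hlE : l * E ≤ δ := (le_div_iff₀ hE).mp (min_le_right _ _)
  have hkey := h l ⟨le_of_lt hl0, hl1⟩
  simp only [Complex.normSq_apply, Complex.add_re, Complex.add_im, Complex.mul_re,
    Complex.mul_im, Complex.sub_re, Complex.sub_im, Complex.ofReal_re, Complex.ofReal_im,
    Complex.one_re, Complex.one_im] at hkey
  have hll : l * (l * E) ≤ l * δ := mul_le_mul_of_nonneg_left hlE (le_of_lt hl0)
  have hld : 0 < l * δ := mul_pos hl0 hδ0
  rw [hEdef] at hll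
  rw [hδ] at hll hld
  nlinarith [hkey, hll, hld]

theorem stmt_18 (S : Set ℂ) (s : ℂ) (hs : s ∈ S)
    (hstar : ∀ z ∈ S, ∀ t ∈ Set.Icc (0:ℝ) 1, ((1 - t) : ℂ) * s + (t : ℂ) * z ∈ S)
    (hmin : ∀ z ∈ S, ‖s‖ ≤ ‖z‖)
    (a : ℂ) (r : ℝ) (hr : 0 ≤ r) :
    ∃ p ∈ Set.image2 (· * ·) (Metric.closedBall a r) S,
      ∀ z ∈ Set.image2 (· * ·) (Metric.closedBall a r) S, ∀ t ∈ Set.Icc (0:ℝ) 1,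
        ((1 - t) : ℂ) * p + (t : ℂ) * z ∈ Set.image2 (· * ·) (Metric.closedBall a r) S := by
  refine ⟨a * s, Set.mem_image2_of_mem (Metric.mem_closedBall_self hr) hs, ?_⟩
  rintro z hz t ht
  obtain ⟨b, hb, w, hw, rfl⟩ := hz
  set u : ℂ := ((1 - t) : ℂ) * s + (t : ℂ) * w with hu_def
  have hu : u ∈ S := hstar w hw t ht
  -- inner product inequality
  have hin : Complex.normSq s ≤ s.re * w.re + s.im * w.im := by
    apply inner_ge_aux
    intro l hl
    have h1 := hmin _ (hstar w hw l hl)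
    have h2 : ‖s‖ ^ 2 ≤ ‖(((1 - l) : ℂ) * s + (l : ℂ) * w)‖ ^ 2 := by
      nlinarith [norm_nonneg s]
    rwa [Complex.sq_norm, Complex.sq_norm] at h2
  have ht0 : (0:ℝ) ≤ t := ht.1
  have ht1 : t ≤ 1 := ht.2
  -- t * |w| ≤ |u|
  have hsq : (t * ‖w‖) ^ 2 ≤ ‖u‖ ^ 2 := by
    rw [mul_pow, Complex.sq_norm, Complex.sq_norm]
    simp only [hu_def, Complex.normSq_apply, Complex.add_re, Complex.add_im, Complex.mul_re,
      Complex.mul_im, Complex.sub_re, Complex.sub_im, Complex.ofReal_re, Complex.ofReal_im,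
      Complex.one_re, Complex.one_im]
    have hin' : s.re * s.re + s.im * s.im ≤ s.re * w.re + s.im * w.im := by
      rw [Complex.normSq_apply] at hin; exact hin
    have h1 : 0 ≤ t * (1 - t) * ((s.re * w.re + s.im * w.im) - (s.re * s.re + s.im * s.im)) :=
      mul_nonneg (mul_nonneg ht0 (by linarith)) (by linarith)
    have h3 : 0 ≤ (1 - t * t) * (s.re * s.re + s.im * s.im) :=
      mul_nonneg (by nlinarith) (by nlinarith [sq_nonneg s.re, sq_nonneg s.im])
    nlinarith [h1, h3]
  have habs : t * ‖w‖ ≤ ‖u‖ := by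
    nlinarith [norm_nonneg u, norm_nonneg w, ht0]
  by_cases hu0 : u = 0
  · -- degenerate case : s = 0 and t*w = 0
    have hs0 : s = 0 := by
      have h0 := hmin u hu
      rw [hu0] at h0
      simp at h0
      exact norm_le_zero_iff.mp (by simpa using h0)
    have htw : (t : ℂ) * w = 0 := by
      have h0 : t * ‖w‖ = 0 := by
        have : ‖u‖ = 0 := by rw [hu0]; simp
        nlinarith [mul_nonneg ht0 (norm_nonneg w)]
      rcases mul_eq_zero.mp h0 with h | h
      · simp [h]
      · simp [norm_eq_zero.mp h]
    refine ⟨a, Metric.mem_closedBall_self hr, s, hs, ?_⟩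
    rw [hs0]
    simp only [mul_zero]
    linear_combination -b * htw
  · -- main case
    set c : ℂ := a + (t : ℂ) * (b - a) * w / u with hc_def
    have hba : ‖b - a‖ ≤ r := by
      rw [Metric.mem_closedBall, Complex.dist_eq] at hb
      exact hb
    have hcmem : c ∈ Metric.closedBall a r := by
      rw [Metric.mem_closedBall, Complex.dist_eq]
      have : c - a = (t : ℂ) * (b - a) * w / u := by rw [hc_def]; ring
      rw [this]
      rw [norm_div, norm_mul, norm_mul, Complex.norm_real, Real.norm_of_nonneg ht0]
      rw [div_le_iff₀ (norm_pos_iff.mpr hu0)]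
      nlinarith [norm_nonneg w, norm_nonneg (b - a), norm_pos_iff.mpr hu0]
    refine ⟨c, hcmem, u, hu, ?_⟩
    beta_reduce
    rw [hc_def, add_mul, div_mul_cancel₀ _ hu0, hu_def]
    ring
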